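/- For the subshift X(M) defined by the monoid M_1(M) (one left bracket λ matching ρ_1,…,ρ_M and one left bracket ξ matching η_1,…,η_M), the generating function of the code E of words λ v ρ_i or ξ v η_i with red(v)=1 coincides with that of the Dyck shift D_{2M}: f(E,z) = (1/2)(1 − √(1 − 8Mz^2)) as formal power series. -/

import Mathlib

open PowerSeries

namespace XShift

/-- The alphabet `Σ₁ = {λ, ξ, ρ₁,…,ρ_M, η₁,…,η_M}` of the subshift `X(M)`. -/
inductive Letter1 (M : ℕ) : Type where
  | lam
  | xi
  | rho (i : Fin M)
  | eta (i : Fin M)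
  deriving DecidableEq

/-- Elements of the monoid `M₁(M)`: `none` is zero; a nonzero element is a reduced
word consisting of right letters (`(false, i)` for `ρᵢ`, `(true, i)` for `ηᵢ`)
followed by left letters (`false` for `λ`, `true` for `ξ`, stored in reverse order).
`some ([], [])` is the identity. -/
abbrev El1 (M : ℕ) : Type := Option (List (Bool × Fin M) × List Bool)

/-- The identity of `M₁(M)`. -/
def one1 (M : ℕ) : El1 M := some ([], [])

/-- Multiplication by a generator, implementing `λρᵢ = 1`, `ξηᵢ = 1`, `ληᵢ = 0`,
`ξρᵢ = 0`. -/
def step1 (M : ℕ) : El1 M → Letter1 M → El1 M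
  | none, _ => none
  | some (r, l), .lam => some (r, false :: l)
  | some (r, l), .xi => some (r, true :: l)
  | some (r, l), .rho i =>
      match l with
      | [] => some (r ++ [(false, i)], [])
      | b :: t => if b = false then some (r, t) else none
  | some (r, l), .eta i =>
      match l with
      | [] => some (r ++ [(true, i)], [])
      | b :: t => if b = true then some (r, t) else none

/-- `red1 w` is the image of a word `w` in the monoid `M₁(M)`. -/
def red1 (M : ℕ) (w : List (Letter1 M)) : El1 M := w.foldl (step1 M) (one1 M)

/-- The code `E` of `X(M)`: words `λ v ρᵢ` or `ξ v ηᵢ` with `red v = 1`. -/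
def codeE1 (M : ℕ) (w : List (Letter1 M)) : Prop :=
  ∃ (i : Fin M) (v : List (Letter1 M)),
    (w = Letter1.lam :: (v ++ [Letter1.rho i]) ∨ w = Letter1.xi :: (v ++ [Letter1.eta i]))
      ∧ red1 M v = one1 M

/-- The number of length-`n` code words of `X(M)`. -/
noncomputable def e1 (M n : ℕ) : ℕ :=
  Nat.card {w : Fin n → Letter1 M // codeE1 M (List.ofFn w)}

/-- The generating function of the code `E` of `X(M)`. -/
noncomputable def fE1 (M : ℕ) : PowerSeries ℚ := PowerSeries.mk fun n => (e1 M n : ℚ)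

/-- Membership in the subshift `X(M)`: all finite subwords have nonzero reduction. -/
def inXShift (M : ℕ) (x : ℤ → Letter1 M) : Prop :=
  ∀ (i : ℤ) (m : ℕ), red1 M (List.ofFn fun k : Fin m => x (i + k)) ≠ none

/-- The number of `n`-periodic points of `X(M)`. -/
noncomputable def pX (M n : ℕ) : ℕ :=
  Nat.card {x : ℤ → Letter1 M // inXShift M x ∧ ∀ k : ℤ, x (k + n) = x k}

/-- Cancel a (reversed) left-letter word against a right-letter word, computing the
multiplier `red(α₋α₊)` of a block with reduction `(r, l)`. -/
def cancel (M : ℕ) : List Bool → List (Bool × Fin M) →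
    Option (List Bool × List (Bool × Fin M))
  | [], r => some ([], r)
  | c :: lt, [] => some (c :: lt, [])
  | c :: lt, (b, _) :: rt => if c = b then cancel M lt rt else none

/-- The multiplier of the length-`n` defining block `x₀x₁⋯x_{n−1}` of a periodic
point `x`, as an element of `M₁(M)` given by the remaining (left, right) letters. -/
def multiplier (M n : ℕ) (x : ℤ → Letter1 M) : Option (List Bool × List (Bool × Fin M)) :=
  match red1 M (List.ofFn fun k : Fin n => x (k : ℤ)) with
  | none => none
  | some (r, l) => cancel M l r

/-- A positive-or-neutral multiplier: no left letters remain after cancellation. -/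
def PosMult (M n : ℕ) (x : ℤ → Letter1 M) : Prop :=
  ∃ r', multiplier M n x = some ([], r')

/-- A negative-or-neutral multiplier: no right letters remain after cancellation. -/
def NegMult (M n : ℕ) (x : ℤ → Letter1 M) : Prop :=
  ∃ l', multiplier M n x = some (l', [])

/-- `p_n⁺(X(M))`: the number of `n`-periodic points of `X(M)` whose defining block
has a positive or neutral multiplier. -/
noncomputable def pXpos (M n : ℕ) : ℕ :=
  Nat.card {x : ℤ → Letter1 M //
    inXShift M x ∧ (∀ k : ℤ, x (k + n) = x k) ∧ PosMult M n x}

/-- `p_n⁻(X(M))`: the number of `n`-periodic points of `X(M)` whose defining block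
has a negative or neutral multiplier. -/
noncomputable def pXneg (M n : ℕ) : ℕ :=
  Nat.card {x : ℤ → Letter1 M //
    inXShift M x ∧ (∀ k : ℤ, x (k + n) = x k) ∧ NegMult M n x}

/- ---------- auxiliary development ---------- -/

variable {M : ℕ}

def opn (M : ℕ) : Bool → Letter1 M
  | false => .lam
  | true => .xi

def cls (M : ℕ) (c : Bool) (i : Fin M) : Letter1 M :=
  match c with
  | false => .rho i
  | true => .eta i

def stk : List (Letter1 M) → List Bool → Option (List Bool)
  | [], l => some l
  | .lam :: t, l => stk t (false :: l)
  | .xi :: t, l => stk t (true :: l)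
  | .rho _ :: t, false :: l => stk t l
  | .rho _ :: _, _ => none
  | .eta _ :: t, true :: l => stk t l
  | .eta _ :: _, _ => none

@[simp] lemma stk_nil (l : List Bool) : stk ([] : List (Letter1 M)) l = some l := rfl
@[simp] lemma stk_lam (t : List (Letter1 M)) (l) : stk (.lam :: t) l = stk t (false :: l) := rfl
@[simp] lemma stk_xi (t : List (Letter1 M)) (l) : stk (.xi :: t) l = stk t (true :: l) := rfl
@[simp] lemma stk_rho (t : List (Letter1 M)) (i) (l) : stk (.rho i :: t) (false :: l) = stk t l := rfl
@[simp] lemma stk_eta (t : List (Letter1 M)) (i) (l) : stk (.eta i :: t) (true :: l) = stk t l := rfl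
@[simp] lemma stk_rho_nil (t : List (Letter1 M)) (i) : stk (.rho i :: t) [] = none := rfl
@[simp] lemma stk_eta_nil (t : List (Letter1 M)) (i) : stk (.eta i :: t) [] = none := rfl
@[simp] lemma stk_rho_true (t : List (Letter1 M)) (i) (l) : stk (.rho i :: t) (true :: l) = none := rfl
@[simp] lemma stk_eta_false (t : List (Letter1 M)) (i) (l) : stk (.eta i :: t) (false :: l) = none := rfl

@[simp] lemma stk_opn (c : Bool) (t : List (Letter1 M)) (l) :
    stk (opn M c :: t) l = stk t (c :: l) := by cases c <;> rfl

@[simp] lemma stk_cls (c : Bool) (i : Fin M) (t : List (Letter1 M)) (l) :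
    stk (cls M c i :: t) (c :: l) = stk t l := by cases c <;> rfl

lemma stk_append (u v : List (Letter1 M)) (l : List Bool) :
    stk (u ++ v) l = (stk u l).bind (stk v) := by
  induction u generalizing l with
  | nil => simp
  | cons x t ih =>
    cases x with
    | lam => simpa using ih _
    | xi => simpa using ih _
    | rho i => rcases l with _ | ⟨_ | _, l⟩ <;> simp [ih]
    | eta i => rcases l with _ | ⟨_ | _, l⟩ <;> simp [ih]

lemma stk_mono {u : List (Letter1 M)} {l l' : List Bool} (h : stk u l = some l') (m : List Bool) :
    stk u (l ++ m) = some (l' ++ m) := by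
  induction u generalizing l with
  | nil => simp_all
  | cons x t ih =>
    cases x with
    | lam => exact ih (l := false :: l) h
    | xi => exact ih (l := true :: l) h
    | rho i => rcases l with _ | ⟨_ | _, l⟩ <;> simp_all <;> exact ih h
    | eta i => rcases l with _ | ⟨_ | _, l⟩ <;> simp_all <;> exact ih h


@[simp] lemma foldl_none (w : List (Letter1 M)) : w.foldl (step1 M) none = none := by
  induction w with
  | nil => rfl
  | cons x t ih => simpa [step1] using ih

lemma stk_to_fold {w : List (Letter1 M)} {l l' : List Bool} (h : stk w l = some l')
    (r : List (Bool × Fin M)) : w.foldl (step1 M) (some (r, l)) = some (r, l') := by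
  induction w generalizing l with
  | nil => simp_all
  | cons x t ih =>
    cases x with
    | lam => exact ih (l := false :: l) h
    | xi => exact ih (l := true :: l) h
    | rho i =>
      rcases l with _ | ⟨_ | _, l⟩ <;> simp_all [step1]
    | eta i =>
      rcases l with _ | ⟨_ | _, l⟩ <;> simp_all [step1]

lemma fold_r_mono {w : List (Letter1 M)} {r l r' l'} 
    (h : w.foldl (step1 M) (some (r, l)) = some (r', l')) : ∃ e, r' = r ++ e := by
  induction w generalizing r l with
  | nil => exact ⟨[], by simp_all⟩
  | cons x t ih =>
    cases x with
    | lam => exact ih (l := false :: l) h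
    | xi => exact ih (l := true :: l) h
    | rho i =>
      rcases l with _ | ⟨_ | _, l⟩
      · simp only [List.foldl_cons, step1] at h
        obtain ⟨e, he⟩ := ih h
        exact ⟨(false, i) :: e, by simp [he]⟩
      · simp only [List.foldl_cons, step1, if_pos rfl] at h
        exact ih h
      · simp only [List.foldl_cons, step1] at h
        simp at h
    | eta i =>
      rcases l with _ | ⟨_ | _, l⟩
      · simp only [List.foldl_cons, step1] at h
        obtain ⟨e, he⟩ := ih h
        exact ⟨(true, i) :: e, by simp [he]⟩
      · simp only [List.foldl_cons, step1] at h
        simp at h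
      · simp only [List.foldl_cons, step1, if_pos rfl] at h
        exact ih h

lemma fold_to_stk {w : List (Letter1 M)} {l l' : List Bool}
    (h : w.foldl (step1 M) (some ([], l)) = some ([], l')) : stk w l = some l' := by
  induction w generalizing l with
  | nil => simp_all
  | cons x t ih =>
    cases x with
    | lam => exact ih (l := false :: l) h
    | xi => exact ih (l := true :: l) h
    | rho i =>
      rcases l with _ | ⟨_ | _, l⟩
      · simp only [List.foldl_cons, step1] at h
        obtain ⟨e, he⟩ := fold_r_mono h
        simp at he
      · simp only [List.foldl_cons, step1, if_pos rfl] at h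
        simpa using ih h
      · simp only [List.foldl_cons, step1] at h
        simp_all
    | eta i =>
      rcases l with _ | ⟨_ | _, l⟩
      · simp only [List.foldl_cons, step1] at h
        obtain ⟨e, he⟩ := fold_r_mono h
        simp at he
      · simp only [List.foldl_cons, step1] at h
        simp_all
      · simp only [List.foldl_cons, step1, if_pos rfl] at h
        simpa using ih h

lemma red1_iff_stk (w : List (Letter1 M)) : red1 M w = one1 M ↔ stk w [] = some [] := by
  constructor
  · exact fun h => fold_to_stk h
  · exact fun h => stk_to_fold h []


def Bal (w : List (Letter1 M)) : Prop := stk w [] = some []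

lemma bal_nil : Bal ([] : List (Letter1 M)) := rfl

lemma bal_red1 {w : List (Letter1 M)} : Bal w ↔ red1 M w = one1 M := (red1_iff_stk w).symm

/-- Localization: a balanced word acts as the identity on any stack. -/
lemma stk_bal {u : List (Letter1 M)} (h : Bal u) (l : List Bool) : stk u l = some l := by
  simpa using stk_mono (u := u) (l := []) (l' := []) h l

lemma bal_append {u v : List (Letter1 M)} (hu : Bal u) (hv : Bal v) : Bal (u ++ v) := by
  unfold Bal at *; rw [stk_append, hu]; exact hv

/-- First-return decomposition. -/
lemma first_return : ∀ n (t : List (Letter1 M)), t.length ≤ n → ∀ (c : Bool) (s : List Bool),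
    stk t (c :: s) = some [] →
    ∃ u i v', t = u ++ cls M c i :: v' ∧ Bal u ∧ stk v' s = some [] := by
  intro n
  induction n with
  | zero =>
    intro t ht c s h
    match t with
    | [] => simp at h
    | _ :: _ => simp at ht
  | succ n ih =>
    intro t ht c s h
    match t with
    | [] => simp at h
    | x :: t' =>
      cases x with
      | lam =>
        rw [stk_lam] at h
        obtain ⟨u₁, j, v₁, ht', hu₁, hv₁⟩ := ih t' (by simpa using Nat.le_of_succ_le_succ ht)
          false (c :: s) h
        have hlen : v₁.length ≤ n := by
          have : t'.length ≤ n := by simpa using Nat.le_of_succ_le_succ ht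
          have := ht' ▸ this
          simp at this; omega
        obtain ⟨u₂, i, v₂, hv₁', hu₂, hv₂⟩ := ih v₁ hlen c s hv₁
        refine ⟨.lam :: u₁ ++ cls M false j :: u₂, i, v₂, ?_, ?_, hv₂⟩
        · simp [ht', hv₁']
        · show stk _ _ = _
          rw [show Letter1.lam :: u₁ ++ cls M false j :: u₂
              = opn M false :: (u₁ ++ cls M false j :: u₂) by rfl]
          rw [stk_opn, stk_append, stk_bal hu₁]
          show stk _ _ = _
          rw [stk_cls]
          exact hu₂
      | xi =>
        rw [stk_xi] at h
        obtain ⟨u₁, j, v₁, ht', hu₁, hv₁⟩ := ih t' (by simpa using Nat.le_of_succ_le_succ ht)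
          true (c :: s) h
        have hlen : v₁.length ≤ n := by
          have : t'.length ≤ n := by simpa using Nat.le_of_succ_le_succ ht
          have := ht' ▸ this
          simp at this; omega
        obtain ⟨u₂, i, v₂, hv₁', hu₂, hv₂⟩ := ih v₁ hlen c s hv₁
        refine ⟨.xi :: u₁ ++ cls M true j :: u₂, i, v₂, ?_, ?_, hv₂⟩
        · simp [ht', hv₁']
        · show stk _ _ = _
          rw [show Letter1.xi :: u₁ ++ cls M true j :: u₂
              = opn M true :: (u₁ ++ cls M true j :: u₂) by rfl]
          rw [stk_opn, stk_append, stk_bal hu₁]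
          show stk _ _ = _
          rw [stk_cls]
          exact hu₂
      | rho i =>
        cases c
        · rw [stk_rho] at h
          exact ⟨[], i, t', rfl, bal_nil, h⟩
        · simp at h
      | eta i =>
        cases c
        · simp at h
        · rw [stk_eta] at h
          exact ⟨[], i, t', rfl, bal_nil, h⟩


def CodeW (w : List (Letter1 M)) : Prop :=
  ∃ (c : Bool) (i : Fin M) (u : List (Letter1 M)), w = opn M c :: (u ++ [cls M c i]) ∧ Bal u

lemma codeE1_iff_codeW (w : List (Letter1 M)) : codeE1 M w ↔ CodeW w := by
  constructor
  · rintro ⟨i, v, h | h, hv⟩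
    · exact ⟨false, i, v, h, bal_red1.2 hv⟩
    · exact ⟨true, i, v, h, bal_red1.2 hv⟩
  · rintro ⟨c, i, u, h, hu⟩
    cases c
    · exact ⟨i, u, Or.inl h, bal_red1.1 hu⟩
    · exact ⟨i, u, Or.inr h, bal_red1.1 hu⟩

lemma codeW_bal {w : List (Letter1 M)} (h : CodeW w) : Bal w := by
  obtain ⟨c, i, u, rfl, hu⟩ := h
  show stk _ _ = _
  rw [stk_opn, stk_append, stk_bal hu]
  show stk _ _ = _
  rw [stk_cls]
  rfl

lemma codeW_length {w : List (Letter1 M)} (h : CodeW w) : 2 ≤ w.length := by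
  obtain ⟨c, i, u, rfl, hu⟩ := h
  simp

/-- A code word has no proper nonempty balanced prefix. -/
lemma codeW_no_proper_prefix {w p q : List (Letter1 M)} (hw : CodeW w) (hpq : p ++ q = w)
    (hp : Bal p) (hpne : p ≠ []) : q = [] := by
  obtain ⟨c, i, u, hweq, hu⟩ := hw
  by_contra hq
  match p, hpne with
  | x :: p₁, _ =>
    rw [hweq] at hpq
    have hx : x = opn M c := by
      have := congrArg (fun l => List.head? l) hpq
      simpa using this
    subst hx
    have hp₁ : p₁ ++ q = u ++ [cls M c i] := by
      simpa using hpq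
    -- p₁ is a prefix of u
    have hlen : p₁.length ≤ u.length := by
      have := congrArg List.length hp₁
      simp at this
      have : q.length ≥ 1 := by
        cases q with
        | nil => exact absurd rfl hq
        | cons a b => simp
      omega
    have hpref : p₁ <+: u := by
      have h1 : p₁ <+: u ++ [cls M c i] := ⟨q, hp₁⟩
      exact List.prefix_of_prefix_length_le h1 (List.prefix_append u [cls M c i]) hlen
    obtain ⟨r, hr⟩ := hpref
    -- stk of p₁ from [c] is [] (from Bal p), but from [] is some l₀; contradiction
    have h1 : stk p₁ [c] = some [] := by
      have : stk (opn M c :: p₁) [] = some [] := hp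
      rwa [stk_opn] at this
    have h2 : ∃ l₀, stk p₁ [] = some l₀ := by
      have hbal : Bal (p₁ ++ r) := hr ▸ hu
      unfold Bal at hbal
      rw [stk_append] at hbal
      cases h : stk p₁ ([] : List Bool) with
      | none => rw [h] at hbal; simp at hbal
      | some l₀ => exact ⟨l₀, rfl⟩
    obtain ⟨l₀, h2⟩ := h2
    have := stk_mono h2 [c]
    simp at this
    rw [h1] at this
    simp at this

/-- Existence of the first-code-word factorization. -/
lemma split_exists {l : List (Letter1 M)} (hl : Bal l) (hne : l ≠ []) :
    ∃ w v, CodeW w ∧ Bal v ∧ l = w ++ v := by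
  match l, hne with
  | x :: t, _ =>
    have hx : ∃ c, x = opn M c ∧ stk t [c] = some [] := by
      cases x with
      | lam => exact ⟨false, rfl, hl⟩
      | xi => exact ⟨true, rfl, hl⟩
      | rho i => exact absurd hl (by simp [Bal])
      | eta i => exact absurd hl (by simp [Bal])
    obtain ⟨c, rfl, hst⟩ := hx
    obtain ⟨u, i, v', ht, hu, hv'⟩ := first_return t.length t le_rfl c [] hst
    exact ⟨opn M c :: (u ++ [cls M c i]), v', ⟨c, i, u, rfl, hu⟩, hv', by simp [ht]⟩

lemma split_unique_aux {w₁ v₁ w₂ v₂ : List (Letter1 M)} (h1 : CodeW w₁) (h2 : CodeW w₂)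
    (hb2 : Bal v₂) (heq : w₁ ++ v₁ = w₂ ++ v₂) (hle : w₁.length ≤ w₂.length) :
    w₁ = w₂ ∧ v₁ = v₂ := by
  have hpref : w₁ <+: w₂ := by
    have h1' : w₁ <+: w₂ ++ v₂ := heq ▸ ⟨v₁, rfl⟩
    exact List.prefix_of_prefix_length_le h1' (List.prefix_append _ _) hle
  obtain ⟨q, hq⟩ := hpref
  have hq0 : q = [] := codeW_no_proper_prefix h2 hq (codeW_bal h1) (by
    intro h; have := codeW_length h1; simp [h] at this)
  subst hq0
  simp at hq
  subst hq
  exact ⟨rfl, by simpa using heq⟩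

lemma split_unique {w₁ v₁ w₂ v₂ : List (Letter1 M)} (h1 : CodeW w₁) (h2 : CodeW w₂)
    (hb1 : Bal v₁) (hb2 : Bal v₂) (heq : w₁ ++ v₁ = w₂ ++ v₂) :
    w₁ = w₂ ∧ v₁ = v₂ := by
  rcases le_total w₁.length w₂.length with h | h
  · exact split_unique_aux h1 h2 hb2 heq h
  · obtain ⟨a, b⟩ := split_unique_aux h2 h1 hb1 heq.symm h
    exact ⟨a.symm, b.symm⟩


/- ---------- counting ---------- -/

instance letterFinite : Finite (Letter1 M) := by
  have : Function.Injective (fun x : Letter1 M =>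
      (match x with
        | .lam => Sum.inl false
        | .xi => Sum.inl true
        | .rho i => Sum.inr (false, i)
        | .eta i => Sum.inr (true, i) : Bool ⊕ (Bool × Fin M))) := by
    rintro x y h
    cases x <;> cases y <;> simp_all
  exact Finite.of_injective _ this

instance listFinite (α : Type*) [Finite α] (n : ℕ) (P : List α → Prop) :
    Finite {l : List α // l.length = n ∧ P l} := by
  have : {l : List α | l.length = n ∧ P l}.Finite :=
    (List.finite_length_eq α n).subset fun l hl => hl.1
  exact this.to_subtype

def fnListEquiv (α : Type*) (n : ℕ) (P : List α → Prop) :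
    {w : Fin n → α // P (List.ofFn w)} ≃ {l : List α // l.length = n ∧ P l} where
  toFun w := ⟨List.ofFn w.1, by simp, w.2⟩
  invFun l := ⟨fun i => l.1.get (Fin.cast l.2.1.symm i), by
    have : List.ofFn (fun i => l.1.get (Fin.cast l.2.1.symm i)) = l.1 := by
      apply List.ext_get (by simp [l.2.1])
      intro i h1 h2
      simp
    rw [this]; exact l.2.2⟩
  left_inv w := by
    apply Subtype.ext
    funext i
    simp
  right_inv l := by
    apply Subtype.ext
    apply List.ext_get (by simp [l.2.1])
    intro i h1 h2
    simp

noncomputable def eN (M n : ℕ) : ℕ := Nat.card {l : List (Letter1 M) // l.length = n ∧ CodeW l}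

noncomputable def bN (M n : ℕ) : ℕ := Nat.card {l : List (Letter1 M) // l.length = n ∧ Bal l}

lemma e1_eq_eN (M n : ℕ) : e1 M n = eN M n := by
  unfold e1 eN
  rw [Nat.card_congr (fnListEquiv (Letter1 M) n (codeE1 M))]
  exact Nat.card_congr (Equiv.subtypeEquivRight fun l => by
    rw [codeE1_iff_codeW])

lemma eN_zero (M : ℕ) : eN M 0 = 0 := by
  unfold eN
  have : IsEmpty {l : List (Letter1 M) // l.length = 0 ∧ CodeW l} :=
    ⟨fun l => by have := codeW_length l.2.2; omega⟩
  exact Nat.card_of_isEmpty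

lemma eN_one (M : ℕ) : eN M 1 = 0 := by
  unfold eN
  have : IsEmpty {l : List (Letter1 M) // l.length = 1 ∧ CodeW l} :=
    ⟨fun l => by have := codeW_length l.2.2; omega⟩
  exact Nat.card_of_isEmpty

lemma opn_inj {c c' : Bool} (h : opn M c = opn M c') : c = c' := by
  cases c <;> cases c' <;> simp_all [opn]

lemma cls_inj {c : Bool} {i i' : Fin M} (h : cls M c i = cls M c i') : i = i' := by
  cases c <;> simp_all [cls]

def codeOfParts (M n : ℕ) :
    ((Bool × Fin M) × {v : List (Letter1 M) // v.length = n ∧ Bal v}) →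
      {l : List (Letter1 M) // l.length = n + 2 ∧ CodeW l} :=
  fun x => ⟨opn M x.1.1 :: (x.2.1 ++ [cls M x.1.1 x.1.2]),
    by simp [x.2.2.1], ⟨x.1.1, x.1.2, x.2.1, rfl, x.2.2.2⟩⟩

lemma eN_succ (M n : ℕ) : eN M (n + 2) = 2 * M * bN M n := by
  unfold eN bN
  have hbij : Function.Bijective (codeOfParts M n) := by
    constructor
    · rintro ⟨⟨c, i⟩, ⟨v, hv, hbv⟩⟩ ⟨⟨c', i'⟩, ⟨v', hv', hbv'⟩⟩ h
      simp only [codeOfParts, Subtype.mk.injEq, List.cons.injEq] at h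
      obtain ⟨hc, ht⟩ := h
      have hc' : c = c' := opn_inj hc
      subst hc'
      have := List.append_inj ht (by omega)
      obtain ⟨hv0, hx⟩ := this
      simp at hx
      have := cls_inj hx
      subst this
      simp [hv0]
    · rintro ⟨l, hlen, c, i, u, rfl, hu⟩
      have hul : u.length = n := by simp at hlen; omega
      exact ⟨⟨⟨c, i⟩, ⟨u, hul, hu⟩⟩, by apply Subtype.ext; rfl⟩
  rw [← Nat.card_eq_of_bijective _ hbij, Nat.card_prod]
  have : Nat.card (Bool × Fin M) = 2 * M := by
    rw [Nat.card_prod]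
    simp
  rw [this]

lemma bN_zero (M : ℕ) : bN M 0 = 1 := by
  unfold bN
  have : Unique {l : List (Letter1 M) // l.length = 0 ∧ Bal l} :=
    { default := ⟨[], rfl, bal_nil⟩
      uniq := fun l => by
        apply Subtype.ext
        have := l.2.1
        simpa using List.length_eq_zero_iff.1 this }
  exact Nat.card_unique

def balOfParts (M n : ℕ) :
    (Σ _p : (Finset.HasAntidiagonal.antidiagonal (n + 1) : Finset (ℕ × ℕ)),
      {w : List (Letter1 M) // w.length = _p.1.1 ∧ CodeW w} ×
        {v : List (Letter1 M) // v.length = _p.1.2 ∧ Bal v}) →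
      {l : List (Letter1 M) // l.length = n + 1 ∧ Bal l} :=
  fun x => ⟨x.2.1.1 ++ x.2.2.1, by
    have hp := Finset.HasAntidiagonal.mem_antidiagonal.1 x.1.2
    simp [x.2.1.2.1, x.2.2.2.1, hp], bal_append (codeW_bal x.2.1.2.2) x.2.2.2.2⟩

lemma bN_succ (M n : ℕ) :
    bN M (n + 1) = ∑ p ∈ Finset.HasAntidiagonal.antidiagonal (n + 1), eN M p.1 * bN M p.2 := by
  have hbij : Function.Bijective (balOfParts M n) := by
    constructor
    · rintro ⟨⟨⟨a, b⟩, hp⟩, ⟨w, hw, hcw⟩, ⟨v, hv, hbv⟩⟩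
        ⟨⟨⟨a', b'⟩, hp'⟩, ⟨w', hw', hcw'⟩, ⟨v', hv', hbv'⟩⟩ h
      simp only [balOfParts, Subtype.mk.injEq] at h
      obtain ⟨rfl, rfl⟩ := split_unique hcw hcw' hbv hbv' h
      obtain rfl : a = a' := hw.symm.trans hw'
      obtain rfl : b = b' := hv.symm.trans hv'
      rfl
    · rintro ⟨l, hlen, hbal⟩
      have hne : l ≠ [] := by intro h; rw [h] at hlen; simp at hlen
      obtain ⟨w, v, hcw, hbv, rfl⟩ := split_exists hbal hne
      have hmem : (w.length, v.length) ∈ Finset.HasAntidiagonal.antidiagonal (n + 1) := by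
        rw [Finset.HasAntidiagonal.mem_antidiagonal]
        simpa using hlen
      exact ⟨⟨⟨(w.length, v.length), hmem⟩, ⟨w, rfl, hcw⟩, ⟨v, rfl, hbv⟩⟩,
        by apply Subtype.ext; rfl⟩
  rw [show bN M (n + 1) = Nat.card {l : List (Letter1 M) // l.length = n + 1 ∧ Bal l} from rfl,
    ← Nat.card_eq_of_bijective _ hbij]
  letI : ∀ p : (Finset.HasAntidiagonal.antidiagonal (n + 1) : Finset (ℕ × ℕ)),
      Fintype ({w : List (Letter1 M) // w.length = p.1.1 ∧ CodeW w} ×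
        {v : List (Letter1 M) // v.length = p.1.2 ∧ Bal v}) := fun p => Fintype.ofFinite _
  rw [Nat.card_eq_fintype_card, Fintype.card_sigma]
  rw [← Finset.sum_coe_sort (Finset.HasAntidiagonal.antidiagonal (n + 1)) (fun p => eN M p.1 * bN M p.2)]
  apply Finset.sum_congr rfl
  intro p _
  rw [← Nat.card_eq_fintype_card, Nat.card_prod]
  rfl


open PowerSeries

noncomputable def fB (M : ℕ) : PowerSeries ℚ := PowerSeries.mk fun n => (bN M n : ℚ)

lemma coeff_fE1 (M n : ℕ) : (coeff (R := ℚ) n) (fE1 M) = (eN M n : ℚ) := by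
  simp [fE1, coeff_mk, e1_eq_eN]

lemma coeff_fB (M n : ℕ) : (coeff (R := ℚ) n) (fB M) = (bN M n : ℚ) := by
  simp [fB, coeff_mk]

lemma constCoeff_fE1 (M : ℕ) : constantCoeff (R := ℚ) (fE1 M) = 0 := by
  rw [← coeff_zero_eq_constantCoeff, coeff_fE1, eN_zero]
  simp

lemma fB_eq (M : ℕ) : fB M = 1 + fE1 M * fB M := by
  ext n
  cases n with
  | zero =>
    simp only [coeff_zero_eq_constantCoeff, map_add, map_mul, constCoeff_fE1, zero_mul, add_zero,
      map_one]
    rw [← coeff_zero_eq_constantCoeff, coeff_fB, bN_zero]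
    simp
  | succ n =>
    rw [coeff_fB, bN_succ]
    rw [map_add, coeff_mul]
    have h1 : (coeff (R := ℚ) (n+1)) (1 : PowerSeries ℚ) = 0 := by
      simp
    rw [h1, zero_add]
    push_cast
    apply Finset.sum_congr rfl
    intro p _
    rw [coeff_fE1, coeff_fB]

lemma fE1_eq (M : ℕ) : fE1 M = C (R := ℚ) (2 * M) * (X ^ 2 * fB M) := by
  ext n
  rw [coeff_C_mul]
  match n with
  | 0 =>
    rw [coeff_fE1, eN_zero]
    have : (coeff (R := ℚ) 0) (X ^ 2 * fB M : PowerSeries ℚ) = 0 := by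
      rw [coeff_mul]
      simp [coeff_X_pow]
    rw [this]; simp
  | 1 =>
    rw [coeff_fE1, eN_one]
    have : (coeff (R := ℚ) 1) (X ^ 2 * fB M : PowerSeries ℚ) = 0 := by
      rw [coeff_mul]
      apply Finset.sum_eq_zero
      rintro ⟨i, j⟩ hm
      rw [Finset.HasAntidiagonal.mem_antidiagonal] at hm
      have hi : i ≠ 2 := by omega
      simp [coeff_X_pow, hi]
    rw [this]; simp
  | (d + 2) =>
    rw [coeff_fE1, eN_succ]
    rw [coeff_X_pow_mul, coeff_fB]
    push_cast
    ring

lemma key (M : ℕ) : fE1 M * (1 - fE1 M) = C (R := ℚ) (2 * M) * X ^ 2 := by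
  have h2 : (1 - fE1 M) * fB M = 1 := by
    linear_combination fB_eq M
  calc fE1 M * (1 - fE1 M) = C (R := ℚ) (2 * M) * (X ^ 2) * ((1 - fE1 M) * fB M) := by
        rw [fE1_eq M]; ring
    _ = C (R := ℚ) (2 * M) * X ^ 2 := by rw [h2]; ring


end XShift

open XShift in
/-- The generating function of the code `E` of `X(M)` coincides with that of the Dyck
shift `D_{2M}`: `f(E,z) = (1/2)(1 − √(1 − 8Mz²))`. -/
theorem xshift_code_generating_function (M : ℕ) (hM : 1 ≤ M)
    (s : PowerSeries ℚ) (hs0 : PowerSeries.constantCoeff (R := ℚ) s = 1)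
    (hs : s ^ 2 = 1 - 8 * (M : PowerSeries ℚ) * PowerSeries.X ^ 2) :
    fE1 M = PowerSeries.C (R := ℚ) (1 / 2) * (1 - s) := by
  
  have hC : (C (R := ℚ) (2 * M) : PowerSeries ℚ) = 2 * (M : PowerSeries ℚ) := by
    rw [show ((2 : ℚ) * M) = ((2 * M : ℕ) : ℚ) by push_cast; ring, map_natCast]
    push_cast
    ring
  have ht2 : (1 - 2 * fE1 M) ^ 2 = s ^ 2 := by
    rw [hs]
    linear_combination (-4 : PowerSeries ℚ) * key M - 4 * X ^ 2 * hC
  have hfac : (s - (1 - 2 * fE1 M)) * (s + (1 - 2 * fE1 M)) = 0 := by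
    linear_combination -ht2
  rcases mul_eq_zero.1 hfac with h | h
  · have h2 : (C (R := ℚ) (1 / 2) : PowerSeries ℚ) * 2 = 1 := by
      rw [show (2 : PowerSeries ℚ) = C (R := ℚ) 2 from (map_ofNat (C (R := ℚ)) 2).symm, ← map_mul]
      norm_num
    linear_combination (C (R := ℚ) (1 / 2)) * h - (fE1 M) * h2
  · exfalso
    have h0 := congrArg (constantCoeff (R := ℚ)) h
    simp only [map_add, map_sub, map_mul, map_one, hs0, constCoeff_fE1, map_zero,
      map_ofNat, mul_zero] at h0
    norm_num at h0
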